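/- (Bohnenblust) For real symmetric α×α matrices A_1, ..., A_n, the following are equivalent: (i) whenever u_1, ..., u_α ∈ ℝ^α satisfy Σ_{i=1}^α u_i^* A_j u_i = 0 for all j ∈ {1,...,n}, then u_1 = ... = u_α = 0; (ii) the linear span of A_1, ..., A_n contains a positive definite matrix. -/

import Mathlib

open MvPolynomial Matrix
attribute [local instance] Matrix.frobeniusNormedAddCommGroup

noncomputable section

abbrev RP (n : ℕ) := MvPolynomial (Fin n) ℝ

/-- Evaluation of the linear pencil `A₀ + ∑ xᵢ Aᵢ` at a point `x ∈ ℝⁿ`. -/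
def pencilEval {n α : ℕ} (A0 : Matrix (Fin α) (Fin α) ℝ) (A : Fin n → Matrix (Fin α) (Fin α) ℝ)
    (x : Fin n → ℝ) : Matrix (Fin α) (Fin α) ℝ :=
  A0 + ∑ i, x i • A i

/-- The linear pencil `A₀ + ∑ xᵢ Aᵢ` as a matrix of polynomials. -/
def pencilPoly {n α : ℕ} (A0 : Matrix (Fin α) (Fin α) ℝ) (A : Fin n → Matrix (Fin α) (Fin α) ℝ) :
    Matrix (Fin α) (Fin α) (RP n) :=
  A0.map C + ∑ i, (X i : RP n) • (A i).map C

/-- `v^* M v` for a matrix of polynomials. -/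
def quadForm {n α : ℕ} (M : Matrix (Fin α) (Fin α) (RP n)) (v : Fin α → RP n) : RP n :=
  v ⬝ᵥ (M *ᵥ v)

/-- A sum of squares of polynomials. -/
def IsSos {n : ℕ} (p : RP n) : Prop := ∃ (k : ℕ) (q : Fin k → RP n), p = ∑ i, q i ^ 2

/-- An sos-matrix: a finite sum `∑ vⱼ vⱼ^*` with `vⱼ` vectors of polynomials. -/
def IsSosMatrix {n α : ℕ} (S : Matrix (Fin α) (Fin α) (RP n)) : Prop :=
  ∃ (k : ℕ) (v : Fin k → Fin α → RP n), S = ∑ j, Matrix.vecMulVec (v j) (v j)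

/-- Membership in the quadratic module `M_A` associated to the pencil. -/
def InQuadModule {n α : ℕ} (A0 : Matrix (Fin α) (Fin α) ℝ)
    (A : Fin n → Matrix (Fin α) (Fin α) ℝ) (p : RP n) : Prop :=
  ∃ s, IsSos s ∧ ∃ (k : ℕ) (v : Fin k → Fin α → RP n),
    p = s + ∑ j, quadForm (pencilPoly A0 A) (v j)

/-- Strong infeasibility: positive distance (Frobenius norm) between the range of the
pencil and the PSD cone. -/
def StronglyInfeasible {n α : ℕ} (A0 : Matrix (Fin α) (Fin α) ℝ)
    (A : Fin n → Matrix (Fin α) (Fin α) ℝ) : Prop :=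
  ∃ ε > (0:ℝ), ∀ (x : Fin n → ℝ) (B : Matrix (Fin α) (Fin α) ℝ), B.PosSemidef →
    ε ≤ dist (pencilEval A0 A x) B

attribute [local instance] Matrix.frobeniusNormedSpace

section Bohnenblust
variable {α : ℕ}

lemma dot_self_nonneg (v : Fin α → ℝ) : 0 ≤ v ⬝ᵥ v :=
  Finset.sum_nonneg fun _ _ => mul_self_nonneg _

lemma dot_self_pos {v : Fin α → ℝ} (h : v ≠ 0) : 0 < v ⬝ᵥ v :=
  lt_of_le_of_ne (dot_self_nonneg v) (fun e => h (dotProduct_self_eq_zero.mp e.symm))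

lemma frob_sq (M : Matrix (Fin α) (Fin α) ℝ) : ‖M‖ ^ 2 = ∑ i, ∑ j, (M i j) ^ 2 := by
  rw [Matrix.frobenius_norm_def]
  rw [← Real.rpow_natCast (((∑ i, ∑ j, ‖M i j‖ ^ (2:ℝ))) ^ (1/2:ℝ)) 2, ← Real.rpow_mul
    (by positivity)]
  norm_num

lemma quad_abs_le (M : Matrix (Fin α) (Fin α) ℝ) (v : Fin α → ℝ) :
    |v ⬝ᵥ M *ᵥ v| ≤ ‖M‖ * (v ⬝ᵥ v) := by
  have key : (v ⬝ᵥ M *ᵥ v) ^ 2 ≤ (‖M‖ * (v ⬝ᵥ v)) ^ 2 := by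
    have h1 : v ⬝ᵥ M *ᵥ v = ∑ p : Fin α × Fin α, M p.1 p.2 * (v p.1 * v p.2) := by
      rw [← Finset.univ_product_univ, Finset.sum_product]
      simp only [dotProduct, mulVec, Finset.mul_sum]
      congr 1 with i; congr 1 with j; ring
    rw [h1, mul_pow, frob_sq]
    calc (∑ p : Fin α × Fin α, M p.1 p.2 * (v p.1 * v p.2)) ^ 2
        ≤ (∑ p : Fin α × Fin α, (M p.1 p.2) ^ 2) * (∑ p : Fin α × Fin α, (v p.1 * v p.2) ^ 2) :=
          Finset.sum_mul_sq_le_sq_mul_sq _ _ _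
      _ = (∑ i, ∑ j, (M i j) ^ 2) * ((v ⬝ᵥ v) ^ 2) := by
          rw [← Finset.univ_product_univ, Finset.sum_product, Finset.sum_product]
          congr 1
          rw [dotProduct, sq, Finset.sum_mul_sum]
          congr 1 with i; congr 1 with j; ring
  have h2 : 0 ≤ ‖M‖ * (v ⬝ᵥ v) := mul_nonneg (norm_nonneg _) (dot_self_nonneg v)
  calc |v ⬝ᵥ M *ᵥ v| = Real.sqrt ((v ⬝ᵥ M *ᵥ v) ^ 2) := (Real.sqrt_sq_eq_abs _).symm
    _ ≤ Real.sqrt ((‖M‖ * (v ⬝ᵥ v)) ^ 2) := Real.sqrt_le_sqrt key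
    _ = ‖M‖ * (v ⬝ᵥ v) := by rw [Real.sqrt_sq h2]



/-- coercivity of a strictly positive quadratic form, via compactness of the sup-norm sphere -/
lemma coercive {M : Matrix (Fin α) (Fin α) ℝ}
    (h : ∀ v : Fin α → ℝ, v ≠ 0 → 0 < v ⬝ᵥ M *ᵥ v) :
    ∃ ε > (0:ℝ), ∀ v : Fin α → ℝ, ε * (v ⬝ᵥ v) ≤ v ⬝ᵥ M *ᵥ v := by
  classical
  by_cases hne : (Metric.sphere (0 : Fin α → ℝ) 1).Nonempty
  · have hcpt : IsCompact (Metric.sphere (0 : Fin α → ℝ) 1) := isCompact_sphere _ _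
    have hcont : Continuous fun v : Fin α → ℝ => v ⬝ᵥ M *ᵥ v := by
      unfold dotProduct mulVec
      exact continuous_finset_sum _ fun i _ => (continuous_apply i).mul
        (continuous_finset_sum _ fun j _ => (continuous_const.mul (continuous_apply j)))
    obtain ⟨w, hw, hwmin⟩ := hcpt.exists_isMinOn hne hcont.continuousOn
    have hw0 : w ≠ 0 := by
      intro h0
      rw [mem_sphere_zero_iff_norm] at hw
      rw [h0] at hw; simp at hw
    set ε0 : ℝ := w ⬝ᵥ M *ᵥ w with hε0
    have hε0pos : 0 < ε0 := h w hw0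
    have hαpos : 0 < (α : ℝ) := by
      obtain ⟨i, -⟩ := Function.ne_iff.mp hw0
      exact_mod_cast i.pos
    refine ⟨ε0 / α, div_pos hε0pos hαpos, fun v => ?_⟩
    rcases eq_or_ne v 0 with rfl | hv
    · simp
    · -- scale v to the sphere
      have hvn : 0 < ‖v‖ := norm_pos_iff.mpr hv
      set w' : Fin α → ℝ := ‖v‖⁻¹ • v with hw'
      have hw's : w' ∈ Metric.sphere (0 : Fin α → ℝ) 1 := by
        rw [mem_sphere_zero_iff_norm, hw', norm_smul]
        simp [abs_of_pos (inv_pos.mpr hvn), inv_mul_cancel₀ hvn.ne']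
      have hmin := hwmin hw's
      have hform : w' ⬝ᵥ M *ᵥ w' = ‖v‖⁻¹ ^ 2 * (v ⬝ᵥ M *ᵥ v) := by
        rw [hw', Matrix.mulVec_smul, smul_dotProduct, dotProduct_smul]
        simp [smul_eq_mul]; ring
      -- v ⬝ᵥ v ≤ α * ‖v‖^2
      have hdot : v ⬝ᵥ v ≤ (α : ℝ) * ‖v‖ ^ 2 := by
        have : ∀ i : Fin α, v i * v i ≤ ‖v‖ ^ 2 := by
          intro i
          have h1 : |v i| ≤ ‖v‖ := norm_le_pi_norm v i
          calc v i * v i = |v i| ^ 2 := by rw [sq_abs]; ring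
            _ ≤ ‖v‖ ^ 2 := pow_le_pow_left₀ (abs_nonneg _) h1 2
        calc v ⬝ᵥ v = ∑ i, v i * v i := rfl
          _ ≤ ∑ _i : Fin α, ‖v‖ ^ 2 := Finset.sum_le_sum fun i _ => this i
          _ = (α : ℝ) * ‖v‖ ^ 2 := by simp [mul_comm]
      have key : ε0 ≤ ‖v‖⁻¹ ^ 2 * (v ⬝ᵥ M *ᵥ v) := by
        have h3 : ε0 ≤ w' ⬝ᵥ M *ᵥ w' := hmin
        rwa [hform] at h3
      have hv2 : v ⬝ᵥ M *ᵥ v ≥ ε0 * ‖v‖ ^ 2 := by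
        have := mul_le_mul_of_nonneg_left key (le_of_lt (by positivity : (0:ℝ) < ‖v‖ ^ 2))
        calc ε0 * ‖v‖ ^ 2 = ‖v‖ ^ 2 * ε0 := by ring
          _ ≤ ‖v‖ ^ 2 * (‖v‖⁻¹ ^ 2 * (v ⬝ᵥ M *ᵥ v)) := this
          _ = v ⬝ᵥ M *ᵥ v := by
              field_simp
      calc ε0 / α * (v ⬝ᵥ v) ≤ ε0 / α * ((α:ℝ) * ‖v‖ ^ 2) := by
            apply mul_le_mul_of_nonneg_left hdot (by positivity)
        _ = ε0 * ‖v‖ ^ 2 := by field_simp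
        _ ≤ v ⬝ᵥ M *ᵥ v := hv2
  · -- sphere empty: every vector is 0
    refine ⟨1, one_pos, fun v => ?_⟩
    rcases eq_or_ne v 0 with rfl | hv
    · simp
    · exact absurd ⟨(‖v‖⁻¹ • v), by
        rw [mem_sphere_zero_iff_norm, norm_smul]
        have hvn : 0 < ‖v‖ := norm_pos_iff.mpr hv
        simp [abs_of_pos (inv_pos.mpr hvn), inv_mul_cancel₀ hvn.ne']⟩ hne


def posSet (α : ℕ) : Set (Matrix (Fin α) (Fin α) ℝ) :=
  {M | ∀ v : Fin α → ℝ, v ≠ 0 → 0 < v ⬝ᵥ M *ᵥ v}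


lemma isOpen_posSet : IsOpen (posSet α) := by
  refine Metric.isOpen_iff.mpr ?_
  intro M hM
  obtain ⟨ε, hε, hco⟩ := coercive hM
  refine ⟨ε, hε, fun C hC v hv => ?_⟩
  have hd : ‖C - M‖ < ε := by rwa [Metric.mem_ball, dist_eq_norm] at hC
  have h1 : v ⬝ᵥ C *ᵥ v = v ⬝ᵥ M *ᵥ v + v ⬝ᵥ (C - M) *ᵥ v := by
    rw [Matrix.sub_mulVec, dotProduct_sub]; ring
  have h2 : |v ⬝ᵥ (C - M) *ᵥ v| ≤ ‖C - M‖ * (v ⬝ᵥ v) := quad_abs_le _ _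
  have h3 : 0 < v ⬝ᵥ v := dot_self_pos hv
  have h4 : -(‖C - M‖ * (v ⬝ᵥ v)) ≤ v ⬝ᵥ (C - M) *ᵥ v := neg_le_of_abs_le h2
  have h5 : ε * (v ⬝ᵥ v) ≤ v ⬝ᵥ M *ᵥ v := hco v
  have h6 : ‖C - M‖ * (v ⬝ᵥ v) < ε * (v ⬝ᵥ v) := by
    exact mul_lt_mul_of_pos_right hd h3
  rw [h1]
  linarith


lemma convex_posSet : Convex ℝ (posSet α) := by
  intro X hX Y hY a b ha hb hab
  intro v hv
  have hform : v ⬝ᵥ (a • X + b • Y) *ᵥ v = a * (v ⬝ᵥ X *ᵥ v) + b * (v ⬝ᵥ Y *ᵥ v) := by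
    rw [Matrix.add_mulVec, dotProduct_add, Matrix.smul_mulVec, Matrix.smul_mulVec,
      dotProduct_smul, dotProduct_smul, smul_eq_mul, smul_eq_mul]
  rw [hform]
  rcases lt_or_eq_of_le ha with ha' | ha'
  · have := mul_nonneg hb (le_of_lt (hY v hv))
    have := mul_pos ha' (hX v hv)
    linarith
  · have hb' : b = 1 := by rw [← ha'] at hab; linarith
    rw [← ha', hb']
    simpa using hY v hv



lemma isHermitian_of_isSymm' {M : Matrix (Fin α) (Fin α) ℝ} (h : M.IsSymm) : M.IsHermitian :=
  (conjTranspose_eq_transpose_of_trivial M).trans h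

theorem stmt_2 {n α : ℕ} (A : Fin n → Matrix (Fin α) (Fin α) ℝ) (hA : ∀ j, (A j).IsSymm) :
    (∀ u : Fin α → Fin α → ℝ,
        (∀ j, (∑ i, u i ⬝ᵥ (A j *ᵥ u i)) = 0) → ∀ i, u i = 0) ↔
      ∃ c : Fin n → ℝ, (∑ j, c j • A j).PosDef := by
  constructor
  · intro hi
    by_contra hno
    push_neg at hno
    rcases eq_or_ne α 0 with hα | hα
    · subst hα
      refine hno 0 ⟨isHermitian_of_isSymm' ?_, fun x hx => absurd (Subsingleton.elim x 0) hx⟩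
      unfold Matrix.IsSymm
      rw [Matrix.transpose_sum]
      simp only [Matrix.transpose_smul]
      exact Finset.sum_congr rfl fun j _ => by rw [hA j]
    set S : Submodule ℝ (Matrix (Fin α) (Fin α) ℝ) := Submodule.span ℝ (Set.range A) with hS
    have hdisj : Disjoint (posSet α) (S : Set (Matrix (Fin α) (Fin α) ℝ)) := by
      rw [Set.disjoint_left]
      intro M hM hMS
      obtain ⟨c, hc⟩ := (Submodule.mem_span_range_iff_exists_fun ℝ).mp hMS
      refine hno c (PosDef.of_dotProduct_mulVec_pos (isHermitian_of_isSymm' ?_) fun x hx => ?_)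
      · unfold Matrix.IsSymm
        rw [Matrix.transpose_sum]
        simp only [Matrix.transpose_smul]
        exact Finset.sum_congr rfl fun j _ => by rw [hA j]
      · rw [star_trivial, hc]
        exact hM x hx
    obtain ⟨f, u0, hfs, hft⟩ :=
      geometric_hahn_banach_open convex_posSet isOpen_posSet S.convex hdisj
    -- f vanishes on the span
    have hf0 : ∀ x ∈ S, f x = 0 := by
      intro x hx
      by_contra hfx
      have h2 := hft _ (S.smul_mem ((u0 - 1) / f x) hx)
      rw [_root_.map_smul, smul_eq_mul, div_mul_cancel₀ _ hfx] at h2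
      linarith
    set g : Matrix (Fin α) (Fin α) ℝ → ℝ := fun M => -(f M) with hg
    have hgpos : ∀ M ∈ posSet α, 0 < g M := by
      intro M hM
      have hu0 : u0 ≤ 0 := by simpa using hft 0 S.zero_mem
      have := hfs M hM
      simp only [hg]
      linarith
    have hone : (1 : Matrix (Fin α) (Fin α) ℝ) ∈ posSet α := by
      intro v hv
      rw [Matrix.one_mulVec]
      exact dot_self_pos hv
    have hg1 : 0 < g 1 := hgpos _ hone
    have hgnn : ∀ M : Matrix (Fin α) (Fin α) ℝ, (∀ v, 0 ≤ v ⬝ᵥ M *ᵥ v) → 0 ≤ g M := by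
      intro M hM
      by_contra hlt
      push_neg at hlt
      set ε : ℝ := -(g M) / (2 * g 1) with hε
      have hεpos : 0 < ε := by
        apply div_pos (by linarith) (by linarith)
      have hmem : M + ε • 1 ∈ posSet α := by
        intro v hv
        have h1 : v ⬝ᵥ (M + ε • 1) *ᵥ v = v ⬝ᵥ M *ᵥ v + ε * (v ⬝ᵥ v) := by
          rw [Matrix.add_mulVec, dotProduct_add, Matrix.smul_mulVec,
            dotProduct_smul, Matrix.one_mulVec, smul_eq_mul]
        rw [h1]
        have := hM v
        have := mul_pos hεpos (dot_self_pos hv)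
        linarith
      have hval : g (M + ε • 1) = g M + ε * g 1 := by
        simp only [hg, map_add, _root_.map_smul, smul_eq_mul]
        ring
      have := hgpos _ hmem
      rw [hval] at this
      have h2 : ε * g 1 = -(g M) / 2 := by
        rw [hε]
        field_simp
      rw [h2] at this
      have h3 : g M + -g M / 2 = g M / 2 := by ring
      rw [h3] at this
      simp only [hg] at this hlt
      linarith
    -- the PSD "moment matrix"
    set P : Matrix (Fin α) (Fin α) ℝ :=
      Matrix.of fun i j => (g (Matrix.single i j 1) + g (Matrix.single j i 1)) / 2 with hP
    have hgsum : ∀ M : Matrix (Fin α) (Fin α) ℝ,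
        ∑ i, ∑ j, M i j * g (Matrix.single i j 1) = g M := by
      intro M
      conv_rhs => rw [matrix_eq_sum_single M]
      simp only [hg, map_sum, Finset.sum_neg_distrib]
      rw [← Finset.sum_neg_distrib]
      congr 1 with i
      rw [← Finset.sum_neg_distrib]
      congr 1 with j
      have : Matrix.single i j (M i j) = M i j • Matrix.single i j (1:ℝ) := by
        rw [Matrix.smul_single, smul_eq_mul, mul_one]
      rw [this, _root_.map_smul, smul_eq_mul]
      ring
    have hquad : ∀ v : Fin α → ℝ, v ⬝ᵥ P *ᵥ v = g (vecMulVec v v) := by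
      intro v
      have hswap : ∑ i, ∑ j, (v i * v j) * g (Matrix.single j i 1)
          = ∑ i, ∑ j, (v i * v j) * g (Matrix.single i j 1) := by
        rw [Finset.sum_comm]
        congr 1 with i
        congr 1 with j
        ring
      have hveme : ∀ i j, (vecMulVec v v) i j = v i * v j := fun i j => rfl
      calc v ⬝ᵥ P *ᵥ v
          = ∑ i, ∑ j, (v i * v j) * ((g (Matrix.single i j 1) + g (Matrix.single j i 1)) / 2) := by
            simp only [dotProduct, mulVec, Finset.mul_sum, hP, Matrix.of_apply]
            congr 1 with i
            congr 1 with j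
            ring
        _ = g (vecMulVec v v) := by
            have expand : ∀ i j : Fin α, (v i * v j) * ((g (Matrix.single i j 1) + g (Matrix.single j i 1)) / 2)
                = (1/2) * ((v i * v j) * g (Matrix.single i j 1))
                  + (1/2) * ((v i * v j) * g (Matrix.single j i 1)) := by
              intro i j; ring
            simp_rw [expand, Finset.sum_add_distrib, ← Finset.mul_sum, hswap]
            rw [← hgsum (vecMulVec v v)]
            simp_rw [hveme]
            ring
    have hPpsd : P.PosSemidef := by
      refine PosSemidef.of_dotProduct_mulVec_nonneg ?_ ?_
      · apply isHermitian_of_isSymm'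
        unfold Matrix.IsSymm
        ext i j
        simp [hP, Matrix.transpose_apply, add_comm]
      · intro x
        rw [star_trivial, hquad x]
        apply hgnn
        intro w
        have : w ⬝ᵥ (vecMulVec x x) *ᵥ w = (∑ i, w i * x i) * (∑ j, x j * w j) := by
          rw [Finset.sum_mul_sum]
          simp only [dotProduct, mulVec, vecMulVec, Finset.mul_sum, Matrix.of_apply]
          congr 1 with i
          congr 1 with j
          ring
        rw [this]
        have : (∑ j, x j * w j) = ∑ i, w i * x i := by
          congr 1 with i; ring
        rw [this]
        exact mul_self_nonneg _
    obtain ⟨B, hB⟩ : ∃ B : Matrix (Fin α) (Fin α) ℝ, P = Bᴴ * B := by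
      open MatrixOrder in
      obtain ⟨X, hX, -, hXX⟩ := CFC.exists_sqrt_of_isSelfAdjoint_of_quasispectrumRestricts
        hPpsd.isHermitian (QuasispectrumRestricts.nnreal_of_nonneg hPpsd.nonneg)
      refine ⟨X, ?_⟩
      rw [show Xᴴ = X from hX]
      exact hXX.symm
    have hBt : P = Bᵀ * B := by rwa [conjTranspose_eq_transpose_of_trivial] at hB
    have hPentry : ∀ i l, P i l = ∑ k, B k i * B k l := by
      intro i l
      rw [hBt]
      simp [Matrix.mul_apply, Matrix.transpose_apply]
    have hform : ∀ j, ∑ k, B k ⬝ᵥ (A j *ᵥ B k) = 0 := by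
      intro j
      have e1 : ∑ k, B k ⬝ᵥ (A j *ᵥ B k) = ∑ i, ∑ l, (A j) i l * P i l := by
        calc ∑ k, B k ⬝ᵥ (A j *ᵥ B k)
            = ∑ k, ∑ i, ∑ l, (A j) i l * (B k i * B k l) := by
              simp only [dotProduct, mulVec, Finset.mul_sum]
              congr 1 with k
              congr 1 with i
              congr 1 with l
              ring
          _ = ∑ i, ∑ l, (A j) i l * P i l := by
              rw [Finset.sum_comm]
              congr 1 with i
              rw [Finset.sum_comm]
              congr 1 with l
              rw [hPentry i l, Finset.mul_sum]
      have hswap2 : ∑ i, ∑ l, (A j) i l * g (Matrix.single l i 1)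
          = ∑ i, ∑ l, (A j) i l * g (Matrix.single i l 1) := by
        rw [Finset.sum_comm]
        congr 1 with i
        congr 1 with l
        rw [(hA j).apply]
      have e2 : ∑ i, ∑ l, (A j) i l * P i l = g (A j) := by
        have expand : ∀ i l : Fin α, (A j) i l * P i l
            = (1/2) * ((A j) i l * g (Matrix.single i l 1))
              + (1/2) * ((A j) i l * g (Matrix.single l i 1)) := by
          intro i l
          simp only [hP, Matrix.of_apply]
          ring
        simp_rw [expand, Finset.sum_add_distrib, ← Finset.mul_sum, hswap2]
        rw [← hgsum (A j)]
        ring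
      have e3 : g (A j) = 0 := by
        have := hf0 (A j) (Submodule.subset_span (Set.mem_range_self j))
        simp [hg, this]
      rw [e1, e2, e3]
    have hu := hi (fun k => B k) hform
    have hB0 : B = 0 := by
      ext k i
      exact congrFun (hu k) i
    have hP0 : P = 0 := by rw [hBt, hB0]; simp
    have htr : ∑ i, P i i = g 1 := by
      rw [← hgsum 1]
      refine Finset.sum_congr rfl fun i _ => ?_
      rw [Finset.sum_eq_single i (fun b _ hb => by simp [Matrix.one_apply, Ne.symm hb])
        (fun hb => absurd (Finset.mem_univ i) hb)]
      simp [hP, Matrix.one_apply]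
    rw [hP0] at htr
    simp at htr
    linarith
  · rintro ⟨c, hc⟩ u hu i
    set M := ∑ j, c j • A j with hM
    have hsum : ∑ i, u i ⬝ᵥ M *ᵥ u i = 0 := by
      have hv : ∀ x : Fin α → ℝ, M *ᵥ x = ∑ j, c j • (A j *ᵥ x) := by
        intro x
        rw [hM]
        rw [show (∑ j, c j • A j) *ᵥ x = ∑ j, (c j • A j) *ᵥ x from ?_]
        · exact Finset.sum_congr rfl fun j _ => by rw [Matrix.smul_mulVec]
        · induction (Finset.univ : Finset (Fin n)) using Finset.induction with
          | empty => simp [Matrix.zero_mulVec]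
          | insert _ _ h ih => simp [Finset.sum_insert h, Matrix.add_mulVec, ih]
      calc ∑ i, u i ⬝ᵥ M *ᵥ u i
          = ∑ i, ∑ j, c j * (u i ⬝ᵥ (A j *ᵥ u i)) := by
            refine Finset.sum_congr rfl fun i _ => ?_
            rw [hv (u i)]
            simp only [dotProduct, Finset.sum_apply, Pi.smul_apply, smul_eq_mul, Finset.mul_sum]
            rw [Finset.sum_comm]
            exact Finset.sum_congr rfl fun j _ => Finset.sum_congr rfl fun k _ => by ring
        _ = ∑ j, c j * ∑ i, u i ⬝ᵥ (A j *ᵥ u i) := by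
            rw [Finset.sum_comm]
            exact Finset.sum_congr rfl fun j _ => by rw [Finset.mul_sum]
        _ = 0 := by
            refine Finset.sum_eq_zero fun j _ => ?_
            rw [hu j, mul_zero]
    have hnn : ∀ i, 0 ≤ u i ⬝ᵥ M *ᵥ u i := by
      intro i
      have := hc.posSemidef.dotProduct_mulVec_nonneg (u i)
      rwa [star_trivial] at this
    have hzero := (Finset.sum_eq_zero_iff_of_nonneg (fun i _ => hnn i)).mp hsum
    by_contra hne
    have := hc.dotProduct_mulVec_pos hne
    rw [star_trivial, hzero i (Finset.mem_univ i)] at this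
    exact lt_irrefl 0 this


end Bohnenblust
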